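/- Let G be a finite group, M = ⊕_{χ∈Irr(G)} M_χ the direct sum of one copy of each irreducible complex G-module, with M_1 the trivial module. Let R ⊆ M be a subspace containing M_1 such that π(R ⊗ R) ⊆ R for every G-module homomorphism π : M ⊗ M → M. Then R = ⊕_{χ∈Irr(G)} (R ∩ M_χ). -/
import Mathlib


open TensorProduct

/-- The direct sum (product) of a finite family of representations. -/
noncomputable def piRep {k G ι : Type*} [CommSemiring k] [Monoid G] (V : ι → Type*)
    [∀ i, AddCommMonoid (V i)] [∀ i, Module k (V i)]
    (ρ : ∀ i, Representation k G (V i)) : Representation k G (∀ i, V i) where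
  toFun g := LinearMap.pi fun i => (ρ i g).comp (LinearMap.proj i)
  map_one' := by ext v i; simp
  map_mul' g h := by ext v i; simp

/-- with `M = ⊕_χ M_χ` the multiplicity-free sum of all irreducible
complex `G`-modules (trivial summand at `i₀`) and `R ⊆ M` a subspace containing the
trivial summand with `π(R ⊗ R) ⊆ R` for all `G`-homomorphisms `π : M ⊗ M → M`, the
subspace `R` decomposes as `R = ⊕_χ (R ∩ M_χ)`. -/
theorem invariant_subspace_decomposes
    (G : Type*) [Group G] [Fintype G]
    (ι : Type*) [Fintype ι] [DecidableEq ι] (V : ι → Type*)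
    [∀ i, AddCommGroup (V i)] [∀ i, Module ℂ (V i)]
    [∀ i, FiniteDimensional ℂ (V i)] [∀ i, Nontrivial (V i)]
    (ρ : ∀ i, Representation ℂ G (V i))
    (hSimple : ∀ i, ∀ p : Submodule ℂ (V i),
      (∀ g : G, ∀ v ∈ p, ρ i g v ∈ p) → p = ⊥ ∨ p = ⊤)
    (hNonIso : ∀ i j, i ≠ j →
      ¬ ∃ f : V i ≃ₗ[ℂ] V j, ∀ (g : G) (v : V i), f (ρ i g v) = ρ j g (f v))
    (hAll : ∀ (U : Type*) [AddCommGroup U] [Module ℂ U] [FiniteDimensional ℂ U]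
      [Nontrivial U] (σ : Representation ℂ G U),
      (∀ p : Submodule ℂ U, (∀ g : G, ∀ v ∈ p, σ g v ∈ p) → p = ⊥ ∨ p = ⊤) →
      ∃ i, ∃ f : U ≃ₗ[ℂ] V i, ∀ (g : G) (v : U), f (σ g v) = ρ i g (f v))
    (i₀ : ι) (hTriv : ∀ (g : G) (v : V i₀), ρ i₀ g v = v)
    (hDim : Module.finrank ℂ (V i₀) = 1)
    (R : Submodule ℂ (∀ i, V i))
    (hR1 : LinearMap.range (LinearMap.single ℂ V i₀) ≤ R)
    (hClosed : ∀ π : ((∀ i, V i) ⊗[ℂ] (∀ i, V i)) →ₗ[ℂ] (∀ i, V i),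
      (∀ g : G, π ∘ₗ ((piRep V ρ).tprod (piRep V ρ) g) = (piRep V ρ g) ∘ₗ π) →
      ∀ x ∈ R, ∀ y ∈ R, π (x ⊗ₜ[ℂ] y) ∈ R) :
    R = ⨆ i, R ⊓ LinearMap.range (LinearMap.single ℂ V i) := by
  classical
  obtain ⟨e, he⟩ := exists_ne (0 : V i₀)
  obtain ⟨φ, hφ⟩ : ∃ φ : Module.Dual ℂ (V i₀), φ e ≠ 0 := by
    by_contra h
    push_neg at h
    exact he ((Module.forall_dual_apply_eq_zero_iff ℂ e).mp h)
  set ℓ : V i₀ →ₗ[ℂ] ℂ := (φ e)⁻¹ • φ with hℓdef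
  have hℓ : ℓ e = 1 := by simp [hℓdef, inv_mul_cancel₀ hφ]
  have key : ∀ (i : ι), ∀ r ∈ R, Pi.single i (r i) ∈ R := by
    intro i r hr
    set π : ((∀ i, V i) ⊗[ℂ] (∀ i, V i)) →ₗ[ℂ] (∀ i, V i) :=
      TensorProduct.lift (LinearMap.mk₂ ℂ
        (fun x y => ℓ (x i₀) • Pi.single i (y i))
        (by intro x x' y; simp [add_smul])
        (by intro c x y; simp [smul_smul])
        (by intro x y y'; simp [Pi.single_add, smul_add])
        (by intro c x y; simp only [Pi.smul_apply, Pi.single_smul]; rw [smul_comm])) with hπ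
    have hequiv : ∀ g : G,
        π ∘ₗ ((piRep V ρ).tprod (piRep V ρ) g) = (piRep V ρ g) ∘ₗ π := by
      intro g
      apply TensorProduct.ext'
      intro x y
      have hpi : ∀ (z : ∀ j, V j) (j : ι), (piRep V ρ g z) j = ρ j g (z j) :=
        fun z j => rfl
      have hx : (piRep V ρ g x) i₀ = x i₀ := by rw [hpi]; exact hTriv g (x i₀)
      have hy : (fun j => ρ j g (Pi.single i (y i) j)) = Pi.single i (ρ i g (y i)) := by
        funext j
        by_cases h : j = i
        · subst h; simp
        · simp [Pi.single_eq_of_ne h]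
      simp only [LinearMap.comp_apply, Representation.tprod_apply, TensorProduct.map_tmul,
        hπ, TensorProduct.lift.tmul, LinearMap.mk₂_apply, hx, map_smul]
      congr 1
      funext j
      rw [hpi, hpi]
      exact (congrFun hy j).symm
    have hmem : (Pi.single i₀ e : ∀ j, V j) ∈ R := hR1 ⟨e, rfl⟩
    have := hClosed π hequiv (Pi.single i₀ e) hmem r hr
    simpa [hπ, hℓ] using this
  apply le_antisymm
  · intro r hr
    have : r = ∑ i, Pi.single i (r i) := (Finset.univ_sum_single r).symm
    rw [this]
    apply Submodule.sum_mem
    intro i _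
    exact Submodule.mem_iSup_of_mem i ⟨key i r hr, ⟨r i, rfl⟩⟩
  · exact iSup_le fun i => inf_le_left
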